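/- Let l be a prime with l ≡ 1 (mod 8) such that 2l = r² + s² for integers r, s with s ≡ ±3 (mod 8). Then the equation x² − 2l·y² = −1 has no integer solutions. -/

import Mathlib

lemma key8 : ∀ (m n c d : ZMod 8), (c = 3 ∨ c = 5) → (d = 3 ∨ d = 5) →
    c * (m ^ 2 - n ^ 2) - d * (2 * m * n) ≠ 1 ∧
    c * (2 * m * n) - d * (m ^ 2 - n ^ 2) ≠ 1 := by decide

lemma sqrt9 : ∀ z : ZMod 16, z ^ 2 = 9 →
    (ZMod.castHom (by norm_num : (8:ℕ) ∣ 16) (ZMod 8)) z = 3 ∨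
    (ZMod.castHom (by norm_num : (8:ℕ) ∣ 16) (ZMod 8)) z = 5 := by decide

theorem epstein_redei (l : ℕ) (hl : l.Prime) (hl8 : l % 8 = 1)
    (r s : ℤ) (hrs : (2 * l : ℤ) = r ^ 2 + s ^ 2)
    (hs : s % 8 = 3 ∨ s % 8 = 5) :
    ¬ ∃ x y : ℤ, x ^ 2 - 2 * l * y ^ 2 = -1 := by
  rintro ⟨x, y, hxy⟩
  have hxy' : x ^ 2 + 1 = 2 * (l:ℤ) * y ^ 2 := by linarith
  -- s mod 16 squared is 9
  have hs16 : ((s : ZMod 16)) ^ 2 = 9 := by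
    rcases hs with h | h
    · obtain ⟨k, rfl⟩ : ∃ k, s = 8 * k + 3 := ⟨s / 8, by omega⟩
      push_cast
      rw [show ((8:ZMod 16)*(k:ZMod 16)+3)^2 = (8*8)*(k:ZMod 16)^2 + 16*(3*(k:ZMod 16)) + 9 by ring]
      simp [show (8 : ZMod 16) * 8 = 0 by decide, show (16 : ZMod 16) = 0 by decide]
    · obtain ⟨k, rfl⟩ : ∃ k, s = 8 * k + 5 := ⟨s / 8, by omega⟩
      push_cast
      rw [show ((8:ZMod 16)*(k:ZMod 16)+5)^2 = (8*8)*(k:ZMod 16)^2 + 16*(5*(k:ZMod 16)) + 16 + 9 by ring]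
      simp [show (8 : ZMod 16) * 8 = 0 by decide, show (16 : ZMod 16) = 0 by decide]
  have hl16 : ((2 * l : ℤ) : ZMod 16) = 2 := by
    obtain ⟨k, hk⟩ : ∃ k, l = 8 * k + 1 := ⟨l / 8, by omega⟩
    rw [hk]
    push_cast
    rw [show (2:ZMod 16) * (8 * (k:ZMod 16) + 1) = 16 * k + 2 by ring]
    simp [show (16 : ZMod 16) = 0 by decide]
  have hr16 : ((r : ZMod 16)) ^ 2 = 9 := by
    have := congrArg (fun t : ℤ => (t : ZMod 16)) hrs
    simp only [Int.cast_add] at this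
    rw [hl16] at this
    push_cast at this
    rw [hs16] at this
    have : (r : ZMod 16) ^ 2 = 2 - 9 := by linear_combination -this
    rw [this]; decide
  -- r and s mod 8 are 3 or 5
  have cast8 : ∀ t : ℤ, (ZMod.castHom (by norm_num : (8:ℕ) ∣ 16) (ZMod 8)) ((t : ZMod 16)) = (t : ZMod 8) := fun t => map_intCast _ t
  have hr8 : (r : ZMod 8) = 3 ∨ (r : ZMod 8) = 5 := by
    have := sqrt9 _ hr16; rwa [cast8] at this
  have hs8 : (s : ZMod 8) = 3 ∨ (s : ZMod 8) = 5 := by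
    have := sqrt9 _ hs16; rwa [cast8] at this
  -- parities
  have hx2 : (x : ZMod 2) = 1 ∧ (r : ZMod 2) = 1 ∧ (s : ZMod 2) = 1 := by
    have h1 : (x : ZMod 2) = 1 := by
      have h := congrArg (fun t : ℤ => (t : ZMod 2)) hxy'
      push_cast at h
      revert h
      generalize (x : ZMod 2) = a
      generalize ((l : ℕ) : ZMod 2) = b
      generalize (y : ZMod 2) = c
      revert a b c; decide
    have h3 : (s : ZMod 2) = 1 := by
      rcases hs with h | h
      · obtain ⟨k, rfl⟩ : ∃ k, s = 8 * k + 3 := ⟨s / 8, by omega⟩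
        push_cast
        generalize (k : ZMod 2) = a; revert a; decide
      · obtain ⟨k, rfl⟩ : ∃ k, s = 8 * k + 5 := ⟨s / 8, by omega⟩
        push_cast
        generalize (k : ZMod 2) = a; revert a; decide
    have h2 : (r : ZMod 2) = 1 := by
      have h := congrArg (fun t : ℤ => (t : ZMod 2)) hrs
      push_cast at h
      rw [h3] at h
      revert h
      generalize (r : ZMod 2) = a
      generalize ((l : ℕ) : ZMod 2) = c
      revert a c; decide
    exact ⟨h1, h2, h3⟩
  -- define u, v
  obtain ⟨u, hu⟩ : ∃ u, x * r + s = 2 * u := by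
    have : ((x * r + s : ℤ) : ZMod 2) = 0 := by
      push_cast; rw [hx2.1, hx2.2.1, hx2.2.2]; decide
    obtain ⟨c, hc⟩ := (ZMod.intCast_zmod_eq_zero_iff_dvd _ 2).mp this
    exact ⟨c, hc⟩
  obtain ⟨v, hv⟩ : ∃ v, x * s - r = 2 * v := by
    have : ((x * s - r : ℤ) : ZMod 2) = 0 := by
      push_cast; rw [hx2.1, hx2.2.1, hx2.2.2]; decide
    obtain ⟨c, hc⟩ := (ZMod.intCast_zmod_eq_zero_iff_dvd _ 2).mp this
    exact ⟨c, hc⟩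
  have huv : u ^ 2 + v ^ 2 = ((l:ℤ) * y) ^ 2 := by
    have h4 : (2*u)^2 + (2*v)^2 = (x^2+1)*(r^2+s^2) := by rw [← hu, ← hv]; ring
    have h5 : (x^2+1)*(r^2+s^2) = 4 * ((l:ℤ)*y)^2 := by rw [hxy', ← hrs]; ring
    nlinarith [h4, h5]
  have hsurv : s * u - r * v = (l : ℤ) := by
    have : 2 * (s * u - r * v) = 2 * (l:ℤ) := by
      rw [hrs]; linear_combination -(s * hu) + r * hv
    linarith
  have hlz : (l : ℤ) ≠ 0 := by exact_mod_cast hl.ne_zero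
  -- get primitive triple with s*U - r*V = e, e ≡ 1 mod 8
  obtain ⟨U, V, Z, hco, hpy, e, he, he8⟩ :
      ∃ U V Z : ℤ, Int.gcd U V = 1 ∧ U ^ 2 + V ^ 2 = Z ^ 2 ∧
        ∃ e : ℤ, s * U - r * V = e ∧ (e : ZMod 8) = 1 := by
    have hgl : (Int.gcd u v : ℤ) ∣ (l : ℤ) := by
      rw [← hsurv]
      exact dvd_sub (Dvd.dvd.mul_left (Int.gcd_dvd_left u v) s) (Dvd.dvd.mul_left (Int.gcd_dvd_right u v) r)
    have hgl' : Int.gcd u v ∣ l := by exact_mod_cast hgl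
    rcases (Nat.Prime.eq_one_or_self_of_dvd hl _ hgl') with hg1 | hgL
    · exact ⟨u, v, (l:ℤ)*y, hg1, huv, (l:ℤ), hsurv, by
        obtain ⟨k, hk⟩ : ∃ k, l = 8 * k + 1 := ⟨l / 8, by omega⟩
        rw [hk]; push_cast
        rw [show (8:ZMod 8) = 0 by decide]; ring⟩
    · have hdu : (l:ℤ) ∣ u := by
        have := Int.gcd_dvd_left (a := u) (b := v)
        rwa [hgL] at this
      have hdv : (l:ℤ) ∣ v := by
        have := Int.gcd_dvd_right (a := u) (b := v)
        rwa [hgL] at this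
      obtain ⟨u₁, rfl⟩ := hdu
      obtain ⟨v₁, rfl⟩ := hdv
      refine ⟨u₁, v₁, y, ?_, ?_, 1, ?_, by decide⟩
      · have : Int.gcd ((l:ℤ) * u₁) ((l:ℤ) * v₁) = l * Int.gcd u₁ v₁ := by
          rw [Int.gcd_mul_left]; simp
        rw [hgL] at this
        have hl1 : l * Int.gcd u₁ v₁ = l * 1 := by omega
        exact Nat.eq_of_mul_eq_mul_left hl.pos hl1
      · have : (l:ℤ)^2 * (u₁^2 + v₁^2) = (l:ℤ)^2 * y^2 := by linear_combination huv
        exact mul_left_cancel₀ (pow_ne_zero 2 hlz) this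
      · have : (l:ℤ) * (s * u₁ - r * v₁) = (l:ℤ) * 1 := by linear_combination hsurv
        exact mul_left_cancel₀ hlz this
  -- classify
  have hpt : PythagoreanTriple U V Z := by
    unfold PythagoreanTriple; nlinarith [hpy]
  obtain ⟨m, n, hmn, -, -, -⟩ := (PythagoreanTriple.coprime_classification).mp ⟨hpt, hco⟩
  have hcast : ((s * U - r * V : ℤ) : ZMod 8) = 1 := by rw [he]; exact he8
  rcases hmn with ⟨rfl, rfl⟩ | ⟨rfl, rfl⟩
  · have := (key8 (m : ZMod 8) (n : ZMod 8) _ _ hs8 hr8).1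
    apply this
    push_cast at hcast ⊢
    linear_combination hcast
  · have := (key8 (m : ZMod 8) (n : ZMod 8) _ _ hs8 hr8).2
    apply this
    push_cast at hcast ⊢
    linear_combination hcast
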